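/- Let G be a group, n ≥ 3, E the set of idempotents of End F_n(G), and IG(E) the free idempotent generated monoid over E. For any a : {1,…,n} → G with a(1) = 1 and any j ∈ {1,…,n}, the following hold in IG(E): (ē_{11} ē_{a,j} ē_{11})(ē_{1j} ē_{a,1}) = ē_{11} and (ē_{1j} ē_{a,1})(ē_{11} ē_{a,j} ē_{11}) = ē_{11}; that is, ē_{1j} ē_{a,1} is the inverse of ē_{11} ē_{a,j} ē_{11} in the maximal subgroup of IG(E) at ē_{11}. -/

import Mathlib

/-- An endomorphism of the rank-`n` free left `G`-act `F_n(G) = G × Fin n`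
(the formal symbols `g x_i` are the pairs `(g, i)`), where the action is
`h • (g, i) = (h * g, i)` and equivariance says `(h • x) a = h • (x a)`. -/
structure ActEnd (G : Type*) [Group G] (n : ℕ) : Type _ where
  toFun : G × Fin n → G × Fin n
  equivariant : ∀ (h : G) (x : G × Fin n),
    toFun (h * x.1, x.2) = (h * (toFun x).1, (toFun x).2)

namespace ActEnd

variable {G : Type*} [Group G] {n : ℕ}

/-- Composition is written left-to-right: `x (a * b) = (x a) b`. -/
instance : Monoid (ActEnd G n) where
  mul a b := ⟨fun x => b.toFun (a.toFun x), by
    intro h x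
    try dsimp only
    rw [a.equivariant h x, b.equivariant]⟩
  one := ⟨id, fun _ _ => rfl⟩
  mul_assoc _ _ _ := rfl
  one_mul _ := rfl
  mul_one _ := rfl

@[simp] theorem mul_toFun (a b : ActEnd G n) (x : G × Fin n) :
    (a * b).toFun x = b.toFun (a.toFun x) := rfl

theorem ext' {a b : ActEnd G n} (h : a.toFun = b.toFun) : a = b := by
  cases a; cases b; cases h; rfl

/-- The rank of an endomorphism of `F_n(G)`: the number of indices `j` such
that `G x_j` meets the image. -/
noncomputable def rank (a : ActEnd G n) : ℕ :=
  Nat.card {j : Fin n // ∃ x, (a.toFun x).2 = j}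

end ActEnd

namespace ActEnd

variable {G : Type*} [Group G] {n : ℕ}

/-- The rank-1 idempotent `e_{a,j}` given by `(g x_t) e_{a,j} = (g * a t * (a j)⁻¹) x_j`.
Taking `a` constantly `1` gives `e_{1j}`, and also `j = 0` gives `e_{11}`
(indices `1, …, n` are realised as `Fin n`, with `1 ↦ 0`). -/
def eaj (a : Fin n → G) (j : Fin n) : ActEnd G n :=
  ⟨fun x => (x.1 * a x.2 * (a j)⁻¹, j), by intro h x; simp [mul_assoc]⟩

theorem eaj_idem (a : Fin n → G) (j : Fin n) : eaj a j * eaj a j = eaj a j := by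
  apply ext'
  funext x
  simp [eaj, mul_assoc]

/-- The map `a_g : g' x_t ↦ (g' * g) x_1`. -/
def aMap (g : G) (h0 : 0 < n) : ActEnd G n :=
  ⟨fun x => (x.1 * g, ⟨0, h0⟩), by intro h x; simp [mul_assoc]⟩

end ActEnd

/-- The principal left ideal `M a` of `a`. -/
def lIdeal {M : Type*} [Monoid M] (a : M) : Set M := Set.range fun m => m * a

/-- The principal right ideal `a M` of `a`. -/
def rIdeal {M : Type*} [Monoid M] (a : M) : Set M := Set.range fun m => a * m

/-- The `H`-class of `e`: all elements that are both `L`- and `R`-related to `e`. -/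
def hClass {M : Type*} [Monoid M] (e : M) : Set M :=
  {a | lIdeal a = lIdeal e ∧ rIdeal a = rIdeal e}

/-- The defining relation of the free idempotent generated monoid `IG(E)`:
`ē f̄ = (e f)‾` whenever `{e, f} ∩ {e f, f e} ≠ ∅`. -/
def igRel (M : Type*) [Monoid M] :
    FreeMonoid {e : M // e * e = e} → FreeMonoid {e : M // e * e = e} → Prop :=
  fun x y => ∃ e f g : {e : M // e * e = e},
    (e.1 * f.1 = e.1 ∨ e.1 * f.1 = f.1 ∨ f.1 * e.1 = e.1 ∨ f.1 * e.1 = f.1) ∧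
    e.1 * f.1 = g.1 ∧
    x = FreeMonoid.of e * FreeMonoid.of f ∧ y = FreeMonoid.of g

/-- The free idempotent generated monoid over the biordered set of idempotents
of `M`: the presented monoid with generators `ē` for each idempotent `e` and
relations `ē f̄ = (e f)‾` whenever `{e, f} ∩ {e f, f e} ≠ ∅`. -/
abbrev IG (M : Type*) [Monoid M] : Type _ := (conGen (igRel M)).Quotient

/-- The generator `ē` of `IG(E)` corresponding to the idempotent `e`. -/
def ebar {M : Type*} [Monoid M] (e : {e : M // e * e = e}) : IG M :=
  (conGen (igRel M)).mk' (FreeMonoid.of e)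

/-- `ē_{a,j}` as an element of `IG(E)` for `E` the idempotents of `End F_n(G)`. -/
def igE {G : Type*} [Group G] {n : ℕ} (a : Fin n → G) (j : Fin n) : IG (ActEnd G n) :=
  ebar ⟨ActEnd.eaj a j, ActEnd.eaj_idem a j⟩

/-- `ē_{11}` as an element of `IG(E)`. -/
def ig11 {G : Type*} [Group G] {n : ℕ} (h0 : 0 < n) : IG (ActEnd G n) :=
  igE (fun _ => (1 : G)) ⟨0, h0⟩


lemma ebar_mul {M : Type*} [Monoid M] (e f g : {e : M // e * e = e})
    (h1 : e.1 * f.1 = e.1 ∨ e.1 * f.1 = f.1 ∨ f.1 * e.1 = e.1 ∨ f.1 * e.1 = f.1)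
    (h2 : e.1 * f.1 = g.1) : ebar e * ebar f = ebar g := by
  unfold ebar
  rw [← MonoidHom.map_mul]
  exact (Con.eq _).2 (ConGen.Rel.of _ _ ⟨e, f, g, h1, h2, rfl, rfl⟩)

lemma igE_mul {G : Type*} [Group G] {n : ℕ} {a b c : Fin n → G} {j k l : Fin n}
    (h1 : ActEnd.eaj a j * ActEnd.eaj b k = ActEnd.eaj a j ∨
          ActEnd.eaj a j * ActEnd.eaj b k = ActEnd.eaj b k ∨
          ActEnd.eaj b k * ActEnd.eaj a j = ActEnd.eaj a j ∨
          ActEnd.eaj b k * ActEnd.eaj a j = ActEnd.eaj b k)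
    (h2 : ActEnd.eaj a j * ActEnd.eaj b k = ActEnd.eaj c l) :
    igE a j * igE b k = igE c l :=
  ebar_mul _ _ _ h1 h2

/-- In `IG(E)`, `ē_{1j} ē_{a,1}` is the (two-sided) inverse of
`ē_{11} ē_{a,j} ē_{11}` in the maximal subgroup at `ē_{11}`. -/
theorem stmt12 {G : Type*} [Group G] {n : ℕ} (hn : 3 ≤ n)
    (a : Fin n → G) (ha : a ⟨0, by omega⟩ = 1) (j : Fin n) :
    (ig11 (G := G) (n := n) (by omega) * igE a j * ig11 (G := G) (n := n) (by omega)) *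
        (igE (fun _ => (1 : G)) j * igE a ⟨0, by omega⟩) = ig11 (G := G) (n := n) (by omega) ∧
    (igE (fun _ => (1 : G)) j * igE a ⟨0, by omega⟩) *
        (ig11 (G := G) (n := n) (by omega) * igE a j * ig11 (G := G) (n := n) (by omega)) = ig11 (G := G) (n := n) (by omega) := by
  set i0 : Fin n := ⟨0, by omega⟩ with hi0
  set one : Fin n → G := fun _ => (1 : G) with hone
  -- the four endomorphisms
  have hEP : igE (G := G) one i0 * igE one j = igE one j :=
    igE_mul (Or.inr (Or.inl (by apply ActEnd.ext'; funext x; simp [ActEnd.eaj, one])))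
      (by apply ActEnd.ext'; funext x; simp [ActEnd.eaj, one])
  have hFP : igE a j * igE one j = igE a j :=
    igE_mul (Or.inl (by apply ActEnd.ext'; funext x; simp [ActEnd.eaj, one, mul_assoc]))
      (by apply ActEnd.ext'; funext x; simp [ActEnd.eaj, one, mul_assoc])
  have hFQ : igE a j * igE a i0 = igE a i0 :=
    igE_mul (Or.inr (Or.inl (by apply ActEnd.ext'; funext x; simp [ActEnd.eaj, mul_assoc])))
      (by apply ActEnd.ext'; funext x; simp [ActEnd.eaj, mul_assoc])
  have hEQ : igE (G := G) one i0 * igE a i0 = igE one i0 :=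
    igE_mul (Or.inl (by apply ActEnd.ext'; funext x; simp [ActEnd.eaj, one, mul_assoc]))
      (by apply ActEnd.ext'; funext x; simp [ActEnd.eaj, one, mul_assoc])
  have hQF : igE a i0 * igE a j = igE a j :=
    igE_mul (Or.inr (Or.inl (by apply ActEnd.ext'; funext x; simp [ActEnd.eaj, mul_assoc])))
      (by apply ActEnd.ext'; funext x; simp [ActEnd.eaj, mul_assoc])
  have hPF : igE (G := G) one j * igE a j = igE one j :=
    igE_mul (Or.inl (by apply ActEnd.ext'; funext x; simp [ActEnd.eaj, one, mul_assoc]))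
      (by apply ActEnd.ext'; funext x; simp [ActEnd.eaj, one, mul_assoc])
  have hPE : igE (G := G) one j * igE one i0 = igE one i0 :=
    igE_mul (Or.inr (Or.inl (by apply ActEnd.ext'; funext x; simp [ActEnd.eaj, one])))
      (by apply ActEnd.ext'; funext x; simp [ActEnd.eaj, one])
  have hQE : igE a i0 * igE one i0 = igE a i0 :=
    igE_mul (Or.inl (by apply ActEnd.ext'; funext x; simp [ActEnd.eaj, one, mul_assoc]))
      (by apply ActEnd.ext'; funext x; simp [ActEnd.eaj, one, mul_assoc])
  have hE : ∀ h0 : (0:ℕ) < n, ig11 (G := G) (n := n) h0 = igE one i0 := fun _ => rfl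
  constructor
  · calc (ig11 (G := G) (n := n) (by omega) * igE a j * ig11 (G := G) (n := n) (by omega)) *
        (igE one j * igE a i0)
        = igE one i0 * igE a j * (igE one i0 * igE one j) * igE a i0 := by
          simp [hE, mul_assoc]
      _ = igE one i0 * (igE a j * igE one j) * igE a i0 := by rw [hEP]; simp [hE, mul_assoc]
      _ = igE one i0 * (igE a j * igE a i0) := by rw [hFP]; simp [hE, mul_assoc]
      _ = igE one i0 * igE a i0 := by rw [hFQ]
      _ = ig11 (G := G) (n := n) (by omega) := by rw [hEQ, hE]
  · calc (igE (G := G) one j * igE a i0) *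
        (ig11 (G := G) (n := n) (by omega) * igE a j * ig11 (G := G) (n := n) (by omega))
        = igE one j * (igE a i0 * igE one i0) * igE a j * igE one i0 := by
          simp [hE, mul_assoc]
      _ = igE one j * (igE a i0 * igE a j) * igE one i0 := by rw [hQE]; simp [hE, mul_assoc]
      _ = igE one j * igE a j * igE one i0 := by rw [hQF]
      _ = igE one j * igE one i0 := by rw [hPF]
      _ = ig11 (G := G) (n := n) (by omega) := by rw [hPE, hE]
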